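/- Let A ⊆ C be commutative noetherian rings with C finitely generated as an A-module. Then there exists a finite chain of intermediate rings A = A_0 ⊆ A_1 ⊆ ... ⊆ A_n = C such that for each k, the conductor ideal [A_{k-1} : A_k] is a prime ideal of A_{k-1}. -/

import Mathlib

/-- The conductor ideal `[B₁ : B₂] = {a ∈ B₁ : a · B₂ ⊆ B₁}` of a pair of subalgebras
of an `A`-algebra `C`, as an ideal of `B₁`. -/
def relConductor {A C : Type*} [CommRing A] [CommRing C] [Algebra A C]
    (B₁ B₂ : Subalgebra A C) : Ideal B₁ where
  carrier := {a : B₁ | ∀ b ∈ B₂, (a : C) * b ∈ B₁}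
  zero_mem' := by
    intro b _
    rw [Subalgebra.coe_zero, zero_mul]
    exact Subalgebra.zero_mem _
  add_mem' := by
    intro a a' ha ha' b hb
    rw [Subalgebra.coe_add, add_mul]
    exact Subalgebra.add_mem _ (ha b hb) (ha' b hb)
  smul_mem' := by
    intro c a ha b hb
    rw [smul_eq_mul, Subalgebra.coe_mul, mul_assoc]
    exact Subalgebra.mul_mem _ c.2 (ha b hb)

theorem mem_relConductor {A C : Type*} [CommRing A] [CommRing C] [Algebra A C]
    {B₁ B₂ : Subalgebra A C} {a : B₁} :
    a ∈ relConductor B₁ B₂ ↔ ∀ b ∈ B₂, (a : C) * b ∈ B₁ := Iff.rfl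

/-- The intermediate subalgebra `B + s·B'` for `s ∈ B ≤ B'`. -/
def midAlg {A C : Type*} [CommRing A] [CommRing C] [Algebra A C]
    (B B' : Subalgebra A C) (s : C) (hs : s ∈ B) (hBB' : B ≤ B') : Subalgebra A C where
  carrier := {x | ∃ b ∈ B, ∃ c ∈ B', x = b + s * c}
  one_mem' := ⟨1, one_mem B, 0, zero_mem B', by ring⟩
  zero_mem' := ⟨0, zero_mem B, 0, zero_mem B', by ring⟩
  add_mem' := by
    rintro x y ⟨b, hb, c, hc, rfl⟩ ⟨b', hb', c', hc', rfl⟩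
    exact ⟨b + b', add_mem hb hb', c + c', add_mem hc hc', by ring⟩
  mul_mem' := by
    rintro x y ⟨b, hb, c, hc, rfl⟩ ⟨b', hb', c', hc', rfl⟩
    refine ⟨b * b', mul_mem hb hb', b * c' + c * b' + s * (c * c'), ?_, by ring⟩
    exact add_mem (add_mem (mul_mem (hBB' hb) hc') (mul_mem hc (hBB' hb')))
      (mul_mem (hBB' hs) (mul_mem hc hc'))
  algebraMap_mem' := fun r =>
    ⟨algebraMap A C r, Subalgebra.algebraMap_mem B r, 0, zero_mem B', by ring⟩

theorem exists_lt_prime_relConductor {A C : Type*} [CommRing A] [IsNoetherianRing A]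
    [CommRing C] [Algebra A C] [Module.Finite A C]
    {B : Subalgebra A C} (hB : B ≠ ⊤) :
    ∃ B' : Subalgebra A C, B < B' ∧ (relConductor B B').IsPrime := by
  haveI : IsNoetherian A C := inferInstance
  haveI : IsNoetherian A B := isNoetherian_submodule' (Subalgebra.toSubmodule B)
  haveI : IsNoetherian (↥B) (↥B) := isNoetherian_of_tower A inferInstance
  set S : Set (Ideal ↥B) := (relConductor B) '' {B' | B < B'} with hS
  obtain ⟨I, hIS, hImax⟩ := (set_has_maximal_iff_noetherian.mpr inferInstance) S
    ⟨relConductor B ⊤, ⟨⊤, lt_top_iff_ne_top.2 hB, rfl⟩⟩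
  obtain ⟨B', hBB', rfl⟩ := hIS
  refine ⟨B', hBB', ?_, ?_⟩
  · -- ne_top
    intro htop
    have h1 : (1 : ↥B) ∈ relConductor B B' := htop ▸ Submodule.mem_top
    have : B' ≤ B := fun b hb => by simpa using h1 b hb
    exact absurd (le_antisymm hBB'.le this) (ne_of_lt hBB')
  · -- mem_or_mem
    intro r s hrs
    by_contra hcon
    push_neg at hcon
    obtain ⟨hr, hs⟩ := hcon
    -- get b₀ ∈ B' with s * b₀ ∉ B
    rw [mem_relConductor] at hs
    push_neg at hs
    obtain ⟨b₀, hb₀, hsb₀⟩ := hs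
    set B'' : Subalgebra A C := midAlg B B' (s : C) s.2 hBB'.le with hB''
    have hleB'' : B ≤ B'' := fun b hb => ⟨b, hb, 0, zero_mem B', by ring⟩
    have hltB'' : B < B'' := by
      refine lt_of_le_of_ne hleB'' fun h => hsb₀ ?_
      have hmem : (s : C) * b₀ ∈ B'' := ⟨0, zero_mem B, b₀, hb₀, by ring⟩
      rwa [← h] at hmem
    have hB''le : B'' ≤ B' := by
      rintro x ⟨b, hb, c, hc, rfl⟩
      exact add_mem ((show B < B' from hBB').le hb) (mul_mem ((show B < B' from hBB').le s.2) hc)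
    have hle : relConductor B B' ≤ relConductor B B'' := by
      intro a ha
      rintro x ⟨b, hb, c, hc, rfl⟩
      have h1 : (a : C) * b ∈ B := mul_mem a.2 hb
      have h2 : (a : C) * c ∈ B := ha c hc
      have : (a : C) * (b + ↑s * c) = (a : C) * b + ↑s * ((a : C) * c) := by ring
      rw [this]
      exact add_mem h1 (mul_mem s.2 h2)
    have heq : relConductor B B' = relConductor B B'' := by
      by_contra hne
      exact hImax _ ⟨B'', hltB'', rfl⟩ (hle.lt_of_ne hne)
    apply hr
    rw [heq, mem_relConductor]
    rintro x ⟨b, hb, c, hc, rfl⟩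
    have h1 : (r : C) * b ∈ B := mul_mem r.2 hb
    have h2 : ((r * s : ↥B) : C) * c ∈ B := hrs c hc
    have : (r : C) * (b + ↑s * c) = (r : C) * b + ((r * s : ↥B) : C) * c := by
      push_cast; ring
    rw [this]
    exact add_mem h1 h2

theorem stmt4 {A C : Type*} [CommRing A] [IsNoetherianRing A] [CommRing C]
    [IsNoetherianRing C] [Algebra A C] (hinj : Function.Injective (algebraMap A C))
    [Module.Finite A C] :
    ∃ (n : ℕ) (F : Fin (n + 1) → Subalgebra A C), Monotone F ∧
      F 0 = ⊥ ∧ F (Fin.last n) = ⊤ ∧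
      ∀ k : Fin n, (relConductor (F k.castSucc) (F k.succ)).IsPrime := by
  haveI : IsNoetherian A C := inferInstance
  have hwfS : WellFounded ((· > ·) : Submodule A C → Submodule A C → Prop) :=
    isNoetherian_iff.mp inferInstance
  have hwf : WellFounded ((· > ·) : Subalgebra A C → Subalgebra A C → Prop) :=
    Subrelation.wf (r := InvImage (· > ·) (Subalgebra.toSubmodule (R := A) (A := C)))
      (fun h => (OrderEmbedding.lt_iff_lt _).2 h)
      (InvImage.wf _ hwfS)
  have key : ∀ B : Subalgebra A C,
      ∃ (n : ℕ) (F : Fin (n + 1) → Subalgebra A C), Monotone F ∧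
        F 0 = B ∧ F (Fin.last n) = ⊤ ∧
        ∀ k : Fin n, (relConductor (F k.castSucc) (F k.succ)).IsPrime := by
    intro B
    induction B using hwf.induction with
    | _ B ih =>
      by_cases hB : B = ⊤
      · exact ⟨0, fun _ => ⊤, monotone_const, hB.symm, rfl, fun k => k.elim0⟩
      · obtain ⟨B', hlt, hprime⟩ := exists_lt_prime_relConductor hB
        obtain ⟨n, F, hmono, hF0, hFl, hpr⟩ := ih B' hlt
        refine ⟨n + 1, Fin.cons B F, ?_, ?_, ?_, ?_⟩
        · rw [Fin.monotone_iff_le_succ]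
          intro i
          induction i using Fin.cases with
          | zero => simpa [hF0] using hlt.le
          | succ j =>
            rw [← Fin.succ_castSucc]
            simpa using hmono j.castSucc_le_succ
        · simp
        · rw [← Fin.succ_last]
          simpa using hFl
        · intro k
          induction k using Fin.cases with
          | zero => rw [← hF0] at hprime; exact hprime
          | succ j =>
            rw [← Fin.succ_castSucc]
            exact hpr j
  obtain ⟨n, F, hmono, hF0, hFl, hpr⟩ := key ⊥
  exact ⟨n, F, hmono, hF0, hFl, hpr⟩
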